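/- If G is a triangle-free graph in W₂ with independence number d = α(G), then the reduced Euler characteristic of the independence complex Δ(G) equals (−1)^{d−1}; that is, Σ_{F independent in G} (−1)^{|F|−1} = (−1)^{α(G)−1} (sum over all independent sets including the empty set, which contributes −1). -/
import Mathlib


open Finset

section EdgeIdealPaper

variable {V : Type*} [Fintype V] [DecidableEq V]

/-- `S` is an independent set of vertices in `G`. -/
def IsIndep (G : SimpleGraph V) (S : Finset V) : Prop :=
  ∀ u ∈ S, ∀ v ∈ S, ¬ G.Adj u v

/-- `S` is a maximal independent set of the induced subgraph of `G` on `A`. -/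
def IsMaxIndepIn (G : SimpleGraph V) (A S : Finset V) : Prop :=
  S ⊆ A ∧ IsIndep G S ∧ ∀ v ∈ A, v ∉ S → ¬ IsIndep G (insert v S)

open scoped Classical in
/-- The independence number of the induced subgraph of `G` on `A`. -/
noncomputable def alphaIn (G : SimpleGraph V) (A : Finset V) : ℕ :=
  ((A.powerset).filter (fun S => IsIndep G S)).sup Finset.card

/-- The induced subgraph of `G` on `A` is well-covered. -/
def WellCoveredIn (G : SimpleGraph V) (A : Finset V) : Prop :=
  ∀ S, IsMaxIndepIn G A S → S.card = alphaIn G A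

/-- The induced subgraph of `G` on `A` is in the class `W₂`. -/
def W2In (G : SimpleGraph V) (A : Finset V) : Prop :=
  WellCoveredIn G A ∧
    ∀ x ∈ A, WellCoveredIn G (A.erase x) ∧ alphaIn G (A.erase x) = alphaIn G A

open scoped Classical in
/-- The neighborhood of a vertex `a` in `G`, as a `Finset`. -/
noncomputable def nbr (G : SimpleGraph V) (a : V) : Finset V :=
  univ.filter (fun v => G.Adj a v)

open scoped Classical in
/-- The neighborhood `N_G(S)` of a set `S` of vertices: vertices outside `S`
adjacent to some vertex of `S`. -/
noncomputable def nbrSet (G : SimpleGraph V) (S : Finset V) : Finset V :=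
  univ.filter (fun v => v ∉ S ∧ ∃ u ∈ S, G.Adj u v)

/-- The vertex set of the localization `G_S = G \ (S ∪ N_G(S))`. -/
noncomputable def loc (G : SimpleGraph V) (S : Finset V) : Finset V :=
  univ \ (S ∪ nbrSet G S)

/-- The vertex set of `G_{ab} = G \ (N_G(a) ∪ N_G(b))`. -/
noncomputable def locE (G : SimpleGraph V) (a b : V) : Finset V :=
  univ \ (nbr G a ∪ nbr G b)

/-- The induced subgraph of `G` on `A` has no isolated vertices. -/
def NoIsolatedIn (G : SimpleGraph V) (A : Finset V) : Prop :=
  ∀ v ∈ A, ∃ u ∈ A, G.Adj v u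

open scoped Classical in
/-- The reduced Euler characteristic `∑_{F} (-1)^{|F|-1}` (the empty face
contributing `-1`) of the independence complex of the induced subgraph of `G` on `A`. -/
noncomputable def indEuler (G : SimpleGraph V) (A : Finset V) : ℤ :=
  -∑ S ∈ (A.powerset).filter (fun S => IsIndep G S), (-1 : ℤ) ^ S.card

end EdgeIdealPaper

set_option linter.unusedSectionVars false
set_option linter.unusedVariables false

section Aux
open scoped Classical
variable {V : Type*} [Fintype V] [DecidableEq V] {G : SimpleGraph V}

open scoped Classical in
noncomputable def locIn (G : SimpleGraph V) (A T : Finset V) : Finset V :=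
  A.filter (fun w => w ∉ T ∧ ∀ t ∈ T, ¬ G.Adj t w)

lemma indep_mono {S T : Finset V} (h : IsIndep G T) (hs : S ⊆ T) : IsIndep G S :=
  fun u hu v hv => h u (hs hu) v (hs hv)

lemma indep_empty : IsIndep G (∅ : Finset V) := by simp [IsIndep]

lemma card_le_alphaIn {A S : Finset V} (hS : S ⊆ A) (h : IsIndep G S) :
    S.card ≤ alphaIn G A := by
  apply Finset.le_sup
  simp [Finset.mem_filter, Finset.mem_powerset, hS, h]

lemma alphaIn_le {A : Finset V} {n : ℕ}
    (h : ∀ S, S ⊆ A → IsIndep G S → S.card ≤ n) : alphaIn G A ≤ n := by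
  apply Finset.sup_le
  intro S hS
  simp only [Finset.mem_filter, Finset.mem_powerset] at hS
  exact h S hS.1 hS.2

lemma alphaIn_mono {A B : Finset V} (h : A ⊆ B) : alphaIn G A ≤ alphaIn G B :=
  alphaIn_le fun S hS hi => card_le_alphaIn (hS.trans h) hi

lemma exists_max_extend {A S : Finset V} (hSA : S ⊆ A) (hS : IsIndep G S) :
    ∃ M, S ⊆ M ∧ IsMaxIndepIn G A M := by
  obtain ⟨M, hM, hmax⟩ := Finset.exists_max_image
    ((A.powerset).filter (fun T => IsIndep G T ∧ S ⊆ T)) Finset.card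
    ⟨S, by simp [hSA, hS]⟩
  simp only [Finset.mem_filter, Finset.mem_powerset] at hM
  refine ⟨M, hM.2.2, hM.1, hM.2.1, fun v hv hvM hind => ?_⟩
  have h1 : insert v M ∈ (A.powerset).filter (fun T => IsIndep G T ∧ S ⊆ T) := by
    simp only [Finset.mem_filter, Finset.mem_powerset]
    exact ⟨Finset.insert_subset hv hM.1, hind, hM.2.2.trans (Finset.subset_insert _ _)⟩
  have := hmax _ h1
  rw [Finset.card_insert_of_notMem hvM] at this
  omega

lemma locIn_subset {A T : Finset V} : locIn G A T ⊆ A := Finset.filter_subset _ _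

lemma mem_locIn {A T : Finset V} {w : V} :
    w ∈ locIn G A T ↔ w ∈ A ∧ w ∉ T ∧ ∀ t ∈ T, ¬ G.Adj t w := by
  simp [locIn]

lemma locIn_empty {A : Finset V} : locIn G A ∅ = A := by
  ext w; simp [mem_locIn]

lemma indep_insert {S : Finset V} {v : V} (hS : IsIndep G S) (h : ∀ u ∈ S, ¬ G.Adj v u) :
    IsIndep G (insert v S) := by
  intro a ha b hb hadj
  rcases Finset.mem_insert.1 ha with rfl | ha' <;> rcases Finset.mem_insert.1 hb with rfl | hb'
  · exact G.irrefl hadj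
  · exact h b hb' hadj
  · exact h a ha' hadj.symm
  · exact hS a ha' b hb' hadj

/-- Maximality transfer: a maximal independent set of `G_v \ X` together with `v`
is a maximal independent set of `A \ X`. -/
lemma max_insert {A X : Finset V} {v : V} (hv : v ∈ A) (hvX : v ∉ X) {S : Finset V}
    (hS : IsMaxIndepIn G ((locIn G A {v}) \ X) S) :
    IsMaxIndepIn G (A \ X) (insert v S) := by
  obtain ⟨hSsub, hSind, hSmax⟩ := hS
  have hSB : ∀ u ∈ S, u ∈ locIn G A {v} := fun u hu => (Finset.mem_sdiff.1 (hSsub hu)).1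
  have hvS : v ∉ S := fun h => by
    have := (mem_locIn.1 (hSB v h)).2.1; simp at this
  refine ⟨?_, ?_, ?_⟩
  · apply Finset.insert_subset (Finset.mem_sdiff.2 ⟨hv, hvX⟩)
    intro u hu
    exact Finset.mem_sdiff.2 ⟨locIn_subset (hSB u hu), (Finset.mem_sdiff.1 (hSsub hu)).2⟩
  · exact indep_insert hSind fun u hu h =>
      (mem_locIn.1 (hSB u hu)).2.2 v (Finset.mem_singleton_self _) h
  · intro w hw hwS hind
    have hwA : w ∈ A := (Finset.mem_sdiff.1 hw).1
    have hwX : w ∉ X := (Finset.mem_sdiff.1 hw).2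
    have hwv : w ≠ v := fun h => hwS (h ▸ Finset.mem_insert_self _ _)
    by_cases hadj : G.Adj v w
    · exact hind v (Finset.mem_insert_of_mem (Finset.mem_insert_self _ _)) w
        (Finset.mem_insert_self _ _) hadj
    · have hwB : w ∈ (locIn G A {v}) \ X := by
        refine Finset.mem_sdiff.2 ⟨mem_locIn.2 ⟨hwA, ?_, ?_⟩, hwX⟩
        · simp [hwv]
        · intro t ht; rw [Finset.mem_singleton] at ht; subst ht; exact hadj
      have hwS' : w ∉ S := fun h => hwS (Finset.mem_insert_of_mem h)
      apply hSmax w hwB hwS'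
      apply indep_mono hind
      intro u hu
      rcases Finset.mem_insert.1 hu with rfl | hu
      · exact Finset.mem_insert_self _ _
      · exact Finset.mem_insert_of_mem (Finset.mem_insert_of_mem hu)

/-- Staples' lemma, single-vertex case. -/
lemma staples_step {A : Finset V} (hw2 : W2In G A) {v : V} (hv : v ∈ A) :
    W2In G (locIn G A {v}) ∧ alphaIn G A = alphaIn G (locIn G A {v}) + 1 := by
  set B := locIn G A {v} with hB
  set d := alphaIn G A with hd
  have hvB : v ∉ B := by simp [hB, mem_locIn]
  -- any maximal indep set of B \ X gives via insert v a maximal one of A \ X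
  -- card of maximal indep sets of B:
  have hcardB : ∀ S, IsMaxIndepIn G B S → S.card + 1 = d := by
    intro S hS
    have hS' : IsMaxIndepIn G (A \ ∅) (insert v S) := by
      apply max_insert hv (Finset.notMem_empty v)
      rwa [Finset.sdiff_empty]
    rw [Finset.sdiff_empty] at hS'
    have := hw2.1 _ hS'
    have hvS : v ∉ S := fun h => hvB (hS.1 h)
    rw [Finset.card_insert_of_notMem hvS] at this
    omega
  -- alphaIn B = d - 1 : first, existence of a maximal indep set of B
  obtain ⟨M, _, hM⟩ := exists_max_extend (Finset.empty_subset B) (indep_empty (G := G))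
  have hMcard : M.card + 1 = d := hcardB M hM
  have halphaB : alphaIn G B + 1 = d := by
    have h1 : alphaIn G B ≤ d - 1 := by
      apply alphaIn_le
      intro S hSB hSi
      have hins : insert v S ⊆ A := Finset.insert_subset hv (hSB.trans locIn_subset)
      have hinsi : IsIndep G (insert v S) :=
        indep_insert hSi fun u hu h =>
          (mem_locIn.1 (hSB hu)).2.2 v (Finset.mem_singleton_self _) h
      have := card_le_alphaIn hins hinsi
      have hvS : v ∉ S := fun h => hvB (hSB h)
      rw [Finset.card_insert_of_notMem hvS] at this
      omega
    have h2 : M.card ≤ alphaIn G B := card_le_alphaIn hM.1 hM.2.1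
    omega
  refine ⟨⟨?_, ?_⟩, by omega⟩
  · intro S hS
    have := hcardB S hS
    omega
  · intro x hxB
    have hxA : x ∈ A := locIn_subset hxB
    have hxv : x ≠ v := fun h => hvB (h ▸ hxB)
    obtain ⟨hwcAx, halphaAx⟩ := hw2.2 x hxA
    -- maximal indep sets of B.erase x have card d - 1
    have hcard' : ∀ S, IsMaxIndepIn G (B.erase x) S → S.card + 1 = d := by
      intro S hS
      rw [Finset.erase_eq] at hS
      have hS' : IsMaxIndepIn G (A \ {x}) (insert v S) :=
        max_insert hv (by simp [Ne.symm hxv]) hS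
      rw [← Finset.erase_eq] at hS'
      have := hwcAx _ hS'
      have hvS : v ∉ S := fun h => hvB ((Finset.sdiff_subset) (hS.1 h))
      rw [Finset.card_insert_of_notMem hvS, halphaAx] at this
      omega
    obtain ⟨M', _, hM'⟩ := exists_max_extend (Finset.empty_subset (B.erase x)) (indep_empty (G := G))
    have hM'card : M'.card + 1 = d := hcard' M' hM'
    have halphaBx : alphaIn G (B.erase x) = alphaIn G B := by
      have h1 : alphaIn G (B.erase x) ≤ alphaIn G B := alphaIn_mono (Finset.erase_subset _ _)
      have h2 : M'.card ≤ alphaIn G (B.erase x) := card_le_alphaIn hM'.1 hM'.2.1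
      omega
    refine ⟨?_, halphaBx⟩
    intro S hS
    have := hcard' S hS
    omega
/-- Staples' lemma: localization at an independent set stays in `W₂`. -/
lemma staples : ∀ (T : Finset V) (A : Finset V), W2In G A → T ⊆ A → IsIndep G T →
    W2In G (locIn G A T) ∧ alphaIn G A = alphaIn G (locIn G A T) + T.card := by
  intro T
  induction T using Finset.induction_on with
  | empty =>
    intro A hw2 _ _
    rw [locIn_empty]
    simp [hw2]
  | @insert t T' htT' ih =>
    intro A hw2 hTA hTi
    have hT'A : T' ⊆ A := (Finset.subset_insert _ _).trans hTA
    have hT'i : IsIndep G T' := indep_mono hTi (Finset.subset_insert _ _)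
    obtain ⟨hw2', halpha'⟩ := ih A hw2 hT'A hT'i
    have htloc : t ∈ locIn G A T' := by
      refine mem_locIn.2 ⟨hTA (Finset.mem_insert_self _ _), htT', fun s hs => ?_⟩
      exact hTi s (Finset.mem_insert_of_mem hs) t (Finset.mem_insert_self _ _)
    have hstep := staples_step hw2' htloc
    have hset : locIn G A (insert t T') = locIn G (locIn G A T') {t} := by
      ext w
      simp only [mem_locIn, Finset.mem_insert, Finset.mem_singleton]
      constructor
      · rintro ⟨hwA, hw1, hw2⟩
        exact ⟨⟨hwA, fun h => hw1 (Or.inr h), fun s hs => hw2 s (Or.inr hs)⟩,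
          fun h => hw1 (Or.inl h), fun s hs => hs ▸ hw2 t (Or.inl rfl)⟩
      · rintro ⟨⟨hwA, hw1, hw2⟩, hw3, hw4⟩
        refine ⟨hwA, ?_, ?_⟩
        · rintro (rfl | h); exacts [hw3 rfl, hw1 h]
        · rintro s (rfl | hs); exacts [hw4 s rfl, hw2 s hs]
    rw [hset]
    refine ⟨hstep.1, ?_⟩
    rw [Finset.card_insert_of_notMem htT']
    omega
lemma no_isolated {A : Finset V} (hw2 : W2In G A) {v : V} (hv : v ∈ A) :
    ∃ u ∈ A, G.Adj v u := by
  by_contra hcon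
  push_neg at hcon
  obtain ⟨hwcAv, halphaAv⟩ := hw2.2 v hv
  obtain ⟨M, _, hM⟩ := exists_max_extend (Finset.empty_subset (A.erase v)) (indep_empty (G := G))
  have hMcard : M.card = alphaIn G A := by rw [hwcAv M hM, halphaAv]
  have hvM : v ∉ M := fun h => (Finset.mem_erase.1 (hM.1 h)).1 rfl
  have hins : insert v M ⊆ A := Finset.insert_subset hv ((hM.1).trans (Finset.erase_subset _ _))
  have hinsi : IsIndep G (insert v M) := by
    refine indep_insert hM.2.1 fun u hu => hcon u ?_
    exact (Finset.erase_subset _ _) (hM.1 hu)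
  have := card_le_alphaIn hins hinsi
  rw [Finset.card_insert_of_notMem hvM] at this
  omega

open scoped Classical in
noncomputable def eChi (G : SimpleGraph V) (A : Finset V) : ℤ :=
  ∑ S ∈ (A.powerset).filter (fun S => IsIndep G S), (-1 : ℤ) ^ S.card

/-- If `v ∈ C` is isolated in `C`, the Euler sum vanishes. -/
lemma eChi_isolated {C : Finset V} {v : V} (hv : v ∈ C) (h : ∀ u ∈ C, ¬ G.Adj v u) :
    eChi G C = 0 := by
  refine Finset.sum_involution
    (fun F _ => if v ∈ F then F.erase v else insert v F) ?_ ?_ ?_ ?_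
  · intro F hF
    by_cases hvF : v ∈ F
    · simp only [hvF, if_true]
      have : F.card = (F.erase v).card + 1 := (Finset.card_erase_add_one hvF).symm
      rw [this, pow_succ]
      ring
    · simp only [hvF, if_false]
      rw [Finset.card_insert_of_notMem hvF, pow_succ]
      ring
  · intro F hF _
    by_cases hvF : v ∈ F
    · simp only [hvF, if_true]
      intro hEq
      have := Finset.notMem_erase v F
      rw [hEq] at this
      exact this hvF
    · simp only [hvF, if_false]
      intro hEq
      have := Finset.mem_insert_self v F
      rw [hEq] at this
      exact hvF this
  · intro F hF
    simp only [Finset.mem_filter, Finset.mem_powerset] at hF ⊢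
    by_cases hvF : v ∈ F
    · simp only [hvF, if_true]
      exact ⟨(Finset.erase_subset _ _).trans hF.1, indep_mono hF.2 (Finset.erase_subset _ _)⟩
    · simp only [hvF, if_false]
      refine ⟨Finset.insert_subset hv hF.1, indep_insert hF.2 fun u hu => h u (hF.1 hu)⟩
  · intro F hF
    by_cases hvF : v ∈ F
    · simp only [hvF, if_true, Finset.notMem_erase, if_false, Finset.insert_erase hvF]
    · simp only [hvF, if_false, Finset.mem_insert_self, if_true, Finset.erase_insert hvF]

/-- The key inclusion–exclusion identity:
`e(A \ S) = ∑_{T ⊆ S} e(A_T)` for `S` independent. -/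
lemma key_identity {A S : Finset V} (hSA : S ⊆ A) (hS : IsIndep G S) :
    eChi G (A \ S) = ∑ T ∈ S.powerset, eChi G (locIn G A T) := by
  -- Step 1: for T ⊆ S, relate eChi (locIn G A T) to a sum over supersets of T.
  have claim1 : ∀ T ∈ S.powerset,
      eChi G (locIn G A T)
        = ∑ F ∈ (A.powerset).filter (fun F => IsIndep G F ∧ T ⊆ F),
            (-1 : ℤ) ^ T.card * (-1 : ℤ) ^ F.card := by
    intro T hT
    rw [Finset.mem_powerset] at hT
    have hTi : IsIndep G T := indep_mono hS hT
    rw [eChi]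
    refine Finset.sum_nbij' (fun F' => T ∪ F') (fun F => F \ T) ?_ ?_ ?_ ?_ ?_
    · intro F' hF'
      simp only [Finset.mem_filter, Finset.mem_powerset] at hF' ⊢
      obtain ⟨hsub, hind⟩ := hF'
      have hdisj : ∀ w ∈ F', w ∉ T ∧ ∀ t ∈ T, ¬ G.Adj t w :=
        fun w hw => ⟨(mem_locIn.1 (hsub hw)).2.1, (mem_locIn.1 (hsub hw)).2.2⟩
      constructor
      · exact Finset.union_subset (hT.trans hSA) (hsub.trans locIn_subset)
      constructor
      · intro a ha b hb hadj
        rcases Finset.mem_union.1 ha with ha' | ha' <;> rcases Finset.mem_union.1 hb with hb' | hb'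
        · exact hTi a ha' b hb' hadj
        · exact (hdisj b hb').2 a ha' hadj
        · exact (hdisj a ha').2 b hb' hadj.symm
        · exact hind a ha' b hb' hadj
      · exact Finset.subset_union_left
    · intro F hF
      simp only [Finset.mem_filter, Finset.mem_powerset] at hF ⊢
      obtain ⟨hsub, hind, hTF⟩ := hF
      refine ⟨fun w hw => ?_, indep_mono hind Finset.sdiff_subset⟩
      rw [Finset.mem_sdiff] at hw
      exact mem_locIn.2 ⟨hsub hw.1, hw.2, fun t htT => hind t (hTF htT) w hw.1⟩
    · intro F' hF'
      simp only [Finset.mem_filter, Finset.mem_powerset] at hF'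
      have : ∀ w ∈ F', w ∉ T := fun w hw => (mem_locIn.1 (hF'.1 hw)).2.1
      exact Finset.union_sdiff_cancel_left
        (Finset.disjoint_left.2 fun a ha haF' => this a haF' ha)
    · intro F hF
      simp only [Finset.mem_filter, Finset.mem_powerset] at hF
      exact Finset.union_sdiff_of_subset hF.2.2
    · intro F' hF'
      simp only [Finset.mem_filter, Finset.mem_powerset] at hF'
      have hdisj : Disjoint T F' := by
        rw [Finset.disjoint_right]
        exact fun a ha => (mem_locIn.1 (hF'.1 ha)).2.1
      rw [Finset.card_union_of_disjoint hdisj, pow_add, ← mul_assoc, ← pow_add,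
        Even.neg_one_pow ⟨T.card, rfl⟩, one_mul]
  rw [Finset.sum_congr rfl claim1]
  -- Step 2: swap the order of summation.
  rw [Finset.sum_comm' (s := S.powerset)
      (t := fun T => (A.powerset).filter (fun F => IsIndep G F ∧ T ⊆ F))
      (t' := (A.powerset).filter (fun F => IsIndep G F))
      (s' := fun F => S.powerset.filter (fun T => T ⊆ F))
      (by
        intro T F
        simp only [Finset.mem_filter, Finset.mem_powerset]
        tauto)]
  -- Step 3: inner sum is an indicator of `S ∩ F = ∅`.
  have inner : ∀ F ∈ (A.powerset).filter (fun F => IsIndep G F),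
      ∑ T ∈ S.powerset.filter (fun T => T ⊆ F), (-1 : ℤ) ^ T.card * (-1 : ℤ) ^ F.card
        = (if S ∩ F = ∅ then 1 else 0) * (-1 : ℤ) ^ F.card := by
    intro F _
    rw [← Finset.sum_mul]
    congr 1
    have hps : S.powerset.filter (fun T => T ⊆ F) = (S ∩ F).powerset := by
      ext T
      simp only [Finset.mem_filter, Finset.mem_powerset, Finset.subset_inter_iff]
    rw [hps, Finset.sum_powerset_neg_one_pow_card]
  rw [Finset.sum_congr rfl inner]
  -- Step 4: conclude.
  rw [eChi]
  have : ∀ F : Finset V, (if S ∩ F = ∅ then (1:ℤ) else 0) * (-1 : ℤ) ^ F.card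
      = (if S ∩ F = ∅ then (-1 : ℤ) ^ F.card else 0) := by
    intro F; split <;> ring
  rw [Finset.sum_congr rfl (fun F _ => this F)]
  conv_rhs => rw [← Finset.sum_filter]
  congr 1
  ext F
  simp only [Finset.mem_filter, Finset.mem_powerset, Finset.subset_sdiff,
    ← Finset.disjoint_iff_inter_eq_empty]
  constructor
  · rintro ⟨⟨hFA, hdis⟩, hind⟩
    exact ⟨⟨hFA, hind⟩, hdis.symm⟩
  · rintro ⟨⟨hFA, hind⟩, hdis⟩
    exact ⟨⟨hFA, hdis.symm⟩, hind⟩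

lemma alphaIn_empty : alphaIn G (∅ : Finset V) = 0 := by
  apply Nat.le_antisymm _ (Nat.zero_le _)
  exact alphaIn_le fun S hS _ => by
    rw [Finset.subset_empty.1 hS]; simp

lemma eChi_empty : eChi G (∅ : Finset V) = 1 := by
  rw [eChi]
  have : (Finset.powerset (∅ : Finset V)).filter (fun S => IsIndep G S) = {∅} := by
    ext S
    simp only [Finset.mem_filter, Finset.powerset_empty, Finset.mem_singleton]
    constructor
    · rintro ⟨h, _⟩; exact h
    · rintro rfl; exact ⟨rfl, indep_empty⟩
  rw [this]
  simp

lemma eChi_main (G : SimpleGraph V) (htf : G.CliqueFree 3) :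
    ∀ d : ℕ, ∀ A : Finset V, W2In G A → alphaIn G A = d → eChi G A = (-1 : ℤ) ^ d := by
  intro d
  induction d using Nat.strong_induction_on with
  | _ d ih =>
    intro A hw2 hd
    rcases A.eq_empty_or_nonempty with rfl | ⟨v, hv⟩
    · rw [alphaIn_empty] at hd
      rw [eChi_empty, ← hd]
      simp
    · obtain ⟨u, hu, hadj⟩ := no_isolated hw2 hv
      set S := A.filter (fun w => G.Adj v w) with hSdef
      have hSA : S ⊆ A := Finset.filter_subset _ _
      have hSne : S.Nonempty := ⟨u, by simp [hSdef, hu, hadj]⟩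
      have hSind : IsIndep G S := by
        intro a ha b hb hab
        rw [hSdef, Finset.mem_filter] at ha hb
        exact htf {v, a, b} (SimpleGraph.is3Clique_triple_iff.2 ⟨ha.2, hb.2, hab⟩)
      have hvS : v ∉ S := by simp [hSdef]
      -- the key identity
      have hkey := key_identity hSA hSind
      -- vanishing of eChi (A \ S) : v is isolated there
      have h0 : eChi G (A \ S) = 0 := by
        apply eChi_isolated (v := v) (Finset.mem_sdiff.2 ⟨hv, hvS⟩)
        intro w hw
        rw [Finset.mem_sdiff] at hw
        intro hadj'
        exact hw.2 (by simp [hSdef, hw.1, hadj'])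
      rw [h0] at hkey
      -- split off the empty set from the powerset sum
      have hmem : (∅ : Finset V) ∈ S.powerset := Finset.empty_mem_powerset S
      rw [← Finset.add_sum_erase _ _ hmem, locIn_empty] at hkey
      -- each nonempty T contributes (-1)^(d - #T)
      have hterm : ∀ T ∈ S.powerset.erase ∅,
          eChi G (locIn G A T) = (-1 : ℤ) ^ d * (-1 : ℤ) ^ T.card := by
        intro T hT
        rw [Finset.mem_erase, Finset.mem_powerset] at hT
        obtain ⟨hTne, hTS⟩ := hT
        have hTA : T ⊆ A := hTS.trans hSA
        have hTi : IsIndep G T := indep_mono hSind hTS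
        obtain ⟨hw2T, halphaT⟩ := staples T A hw2 hTA hTi
        have hTcard : 0 < T.card := Finset.card_pos.2 (Finset.nonempty_iff_ne_empty.2 hTne)
        set k := alphaIn G (locIn G A T) with hk
        have hkd : k + T.card = d := by rw [← hd, halphaT]
        have hklt : k < d := by omega
        have := ih k hklt (locIn G A T) hw2T rfl
        rw [this]
        have : ((-1 : ℤ)) ^ d = (-1) ^ k * (-1) ^ T.card := by
          rw [← pow_add, hkd]
        rw [this, mul_assoc, ← pow_add, Even.neg_one_pow ⟨T.card, rfl⟩, mul_one]
      rw [Finset.sum_congr rfl hterm, ← Finset.mul_sum,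
        Finset.sum_erase_eq_sub hmem, Finset.sum_powerset_neg_one_pow_card_of_nonempty hSne]
          at hkey
      simp only [Finset.card_empty, pow_zero, zero_sub, mul_neg, mul_one] at hkey
      linarith [hkey]

end Aux

section EdgeIdealPaper

variable {V : Type*} [Fintype V] [DecidableEq V]

/-- If `G` is a triangle-free graph in `W₂`, then the reduced Euler characteristic
`∑_{F independent} (-1)^{|F|-1}` of the independence complex equals
`(-1)^{α(G)-1} = -(-1)^{α(G)}`. -/
theorem stmt9 (G : SimpleGraph V) (htf : G.CliqueFree 3)
    (hw2 : W2In G Finset.univ) :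
    indEuler G Finset.univ = -(-1 : ℤ) ^ alphaIn G Finset.univ := by
  have h := eChi_main G htf (alphaIn G Finset.univ) Finset.univ hw2 rfl
  have he : indEuler G Finset.univ = -eChi G Finset.univ := rfl
  rw [he, h]

end EdgeIdealPaper
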